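/- Let n be a positive integer and define the softmax map on ℝ^n by softmax(z)_i = exp(z_i) / ∑_{j} exp(z_j). Then softmax is 1-Lipschitz with respect to the Euclidean norm: for all z_1, z_2 ∈ ℝ^n, ‖softmax(z_1) − softmax(z_2)‖_2 ≤ ‖z_1 − z_2‖_2. -/

import Mathlib

open Finset Real

/-- The softmax Jacobian-type linear map, as a continuous linear map on Euclidean space. -/
noncomputable def smJ (n : ℕ) (p : Fin n → ℝ) :
    EuclideanSpace ℝ (Fin n) →L[ℝ] EuclideanSpace ℝ (Fin n) :=
  LinearMap.toContinuousLinearMap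
  { toFun := fun x => WithLp.toLp 2 (fun i => p i * x i - p i * ∑ j, p j * x j)
    map_add' := by
      intro x y
      ext i
      simp only [PiLp.add_apply, mul_add, Finset.sum_add_distrib]
      ring
    map_smul' := by
      intro c x
      ext i
      simp only [PiLp.smul_apply, smul_eq_mul, RingHom.id_apply]
      have : ∑ j, p j * (c * x j) = c * ∑ j, p j * x j := by
        rw [Finset.mul_sum]; exact Finset.sum_congr rfl fun j _ => by ring
      rw [this]; ring }

lemma smJ_apply (n : ℕ) (p : Fin n → ℝ) (x : EuclideanSpace ℝ (Fin n)) (i : Fin n) :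
    smJ n p x i = p i * x i - p i * ∑ j, p j * x j := rfl

/-- Key quadratic inequality: if `p` is a probability vector then
`∑ (p i * x i - p i * S)² ≤ ∑ x i²` where `S = ∑ p j x j`. -/
lemma key_ineq {n : ℕ} (p x : Fin n → ℝ) (hp0 : ∀ i, 0 ≤ p i) (hp1 : ∑ i, p i = 1) :
    ∑ i, (p i * x i - p i * ∑ j, p j * x j) ^ 2 ≤ ∑ i, x i ^ 2 := by
  set S := ∑ j, p j * x j with hS
  have hple : ∀ i, p i ≤ 1 := by
    intro i
    calc p i ≤ ∑ j, p j := Finset.single_le_sum (fun j _ => hp0 j) (Finset.mem_univ i)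
    _ = 1 := hp1
  have step1 : ∀ i, (p i * x i - p i * S) ^ 2 ≤ p i * (x i - S) ^ 2 := by
    intro i
    have h1 : (p i * x i - p i * S) ^ 2 = p i ^ 2 * (x i - S) ^ 2 := by ring
    rw [h1]
    have : p i ^ 2 ≤ p i := by nlinarith [hp0 i, hple i]
    nlinarith [sq_nonneg (x i - S)]
  calc ∑ i, (p i * x i - p i * S) ^ 2 ≤ ∑ i, p i * (x i - S) ^ 2 :=
        Finset.sum_le_sum fun i _ => step1 i
    _ = ∑ i, p i * x i ^ 2 - S ^ 2 := by
        have expand : ∀ i, p i * (x i - S) ^ 2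
            = p i * x i ^ 2 - 2 * S * (p i * x i) + S ^ 2 * p i := by intro i; ring
        rw [Finset.sum_congr rfl fun i _ => expand i]
        rw [Finset.sum_add_distrib, Finset.sum_sub_distrib, ← Finset.mul_sum, ← Finset.mul_sum,
          hp1, ← hS]
        ring
    _ ≤ ∑ i, p i * x i ^ 2 := by nlinarith [sq_nonneg S]
    _ ≤ ∑ i, x i ^ 2 := Finset.sum_le_sum fun i _ => by
        nlinarith [sq_nonneg (x i), hp0 i, hple i]

theorem softmax_lipschitz (n : ℕ) (hn : 0 < n)
    (softmax : (Fin n → ℝ) → (Fin n → ℝ))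
    (hsm : ∀ z i, softmax z i = Real.exp (z i) / ∑ j, Real.exp (z j)) :
    ∀ z1 z2 : Fin n → ℝ,
      Real.sqrt (∑ i, (softmax z1 i - softmax z2 i) ^ 2) ≤
        Real.sqrt (∑ i, (z1 i - z2 i) ^ 2) := by
  intro z1 z2
  set E := EuclideanSpace ℝ (Fin n) with hE
  have gpos : ∀ z : E, 0 < ∑ j, Real.exp (z j) := fun z =>
    Finset.sum_pos (fun j _ => Real.exp_pos _) (Finset.univ_nonempty_iff.2 ⟨⟨0, hn⟩⟩)
  set f : E → E := fun z => WithLp.toLp 2 (fun i => Real.exp (z i) / ∑ j, Real.exp (z j)) with hf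
  have hP0 : ∀ (z : E) (i : Fin n), 0 ≤ f z i := fun z i =>
    div_nonneg (Real.exp_pos _).le (gpos z).le
  have hP1 : ∀ z : E, ∑ i, f z i = 1 := by
    intro z
    simp only [hf]
    rw [← Finset.sum_div]
    exact div_self (gpos z).ne'
  -- derivative of f
  have hderiv : ∀ z : E, HasFDerivWithinAt f (smJ n (f z)) Set.univ z := by
    intro z
    rw [hasFDerivWithinAt_piLp]
    intro i
    have hproj : ∀ (k : Fin n), HasFDerivWithinAt (fun x : E => x k)
        (PiLp.proj (𝕜 := ℝ) 2 (fun _ : Fin n => ℝ) k) Set.univ z := fun k =>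
      (PiLp.proj (𝕜 := ℝ) 2 (fun _ : Fin n => ℝ) k).hasFDerivWithinAt
    have hexp : ∀ (k : Fin n), HasFDerivWithinAt (fun x : E => Real.exp (x k))
        (Real.exp (z k) • PiLp.proj (𝕜 := ℝ) 2 (fun _ : Fin n => ℝ) k) Set.univ z := fun k =>
      by have := (Real.hasDerivAt_exp (z k)).comp_hasFDerivWithinAt z (hproj k); exact this
    have hg : HasFDerivWithinAt (fun x : E => ∑ j, Real.exp (x j))
        (∑ j, Real.exp (z j) • PiLp.proj (𝕜 := ℝ) 2 (fun _ : Fin n => ℝ) j) Set.univ z :=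
      HasFDerivWithinAt.fun_sum fun j _ => hexp j
    have hginv : HasFDerivWithinAt (fun x : E => (∑ j, Real.exp (x j))⁻¹)
        ((-((∑ j, Real.exp (z j)) ^ 2)⁻¹) •
          ∑ j, Real.exp (z j) • PiLp.proj (𝕜 := ℝ) 2 (fun _ : Fin n => ℝ) j)
        Set.univ z :=
      (hasDerivAt_inv (gpos z).ne').comp_hasFDerivWithinAt z hg
    have hcomp := (hexp i).fun_mul hginv
    have heq : HasFDerivWithinAt (fun x : E => f x i)
        (Real.exp (z i) •
            ((-((∑ j, Real.exp (z j)) ^ 2)⁻¹) •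
              ∑ j, Real.exp (z j) • PiLp.proj (𝕜 := ℝ) 2 (fun _ : Fin n => ℝ) j) +
          (∑ j, Real.exp (z j))⁻¹ •
            (Real.exp (z i) • PiLp.proj (𝕜 := ℝ) 2 (fun _ : Fin n => ℝ) i))
        Set.univ z := by
      refine hcomp.congr (fun x _ => ?_) ?_
      · simp only [hf]; rw [div_eq_mul_inv]
      · simp only [hf]; rw [div_eq_mul_inv]
    refine heq.congr_fderiv ?_
    ext x
    simp only [ContinuousLinearMap.add_apply, ContinuousLinearMap.coe_smul',
      Pi.smul_apply, ContinuousLinearMap.coe_sum', Finset.sum_apply,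
      ContinuousLinearMap.coe_comp', Function.comp_apply, smul_eq_mul,
      PiLp.proj_apply, ContinuousLinearMap.neg_apply]
    rw [smJ_apply]
    simp only [hf]
    have hsum1 : ∑ j, Real.exp (z j) / (∑ k, Real.exp (z k)) * x j
        = (∑ j, Real.exp (z j) * x j) / (∑ j, Real.exp (z j)) := by
      rw [Finset.sum_div]
      exact Finset.sum_congr rfl fun j _ => by ring
    rw [hsum1]
    set G := ∑ j, Real.exp (z j) with hG
    set T := ∑ j, Real.exp (z j) * x j with hT
    have hG0 : G ≠ 0 := (gpos z).ne'
    field_simp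
    ring
  -- operator norm bound
  have hbound : ∀ z : E, ‖smJ n (f z)‖ ≤ 1 := by
    intro z
    refine ContinuousLinearMap.opNorm_le_bound _ zero_le_one fun x => ?_
    rw [one_mul, EuclideanSpace.norm_eq, EuclideanSpace.norm_eq]
    apply Real.sqrt_le_sqrt
    calc ∑ i, ‖smJ n (f z) x i‖ ^ 2
        = ∑ i, (f z i * x i - f z i * ∑ j, f z j * x j) ^ 2 :=
          Finset.sum_congr rfl fun i _ => by rw [smJ_apply, Real.norm_eq_abs, sq_abs]
      _ ≤ ∑ i, (x i) ^ 2 := key_ineq _ _ (hP0 z) (hP1 z)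
      _ = ∑ i, ‖x i‖ ^ 2 := Finset.sum_congr rfl fun i _ => by
          rw [Real.norm_eq_abs, sq_abs]
  -- mean value inequality
  set a : E := (WithLp.equiv 2 (Fin n → ℝ)).symm z1 with ha
  set b : E := (WithLp.equiv 2 (Fin n → ℝ)).symm z2 with hb
  have key : ‖f a - f b‖ ≤ 1 * ‖a - b‖ :=
    convex_univ.norm_image_sub_le_of_norm_hasFDerivWithin_le
      (fun x _ => hderiv x) (fun x _ => hbound x) (Set.mem_univ b) (Set.mem_univ a)
  rw [one_mul] at key
  have e1 : Real.sqrt (∑ i, (softmax z1 i - softmax z2 i) ^ 2) = ‖f a - f b‖ := by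
    rw [EuclideanSpace.norm_eq]
    congr 1
    refine Finset.sum_congr rfl fun i _ => ?_
    rw [Real.norm_eq_abs, sq_abs, hsm, hsm]
    rfl
  have e2 : ‖a - b‖ = Real.sqrt (∑ i, (z1 i - z2 i) ^ 2) := by
    rw [EuclideanSpace.norm_eq]
    congr 1
    refine Finset.sum_congr rfl fun i _ => ?_
    rw [Real.norm_eq_abs, sq_abs]
    rfl
  rw [e1, ← e2]
  exact key
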